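/- Fundamental Theorem of Subresultants (vanishing part): Let (P_1,...,P_k) be a complete PRS for F and G with n_i = deg(P_i). Then S_j(F,G) = 0 for every j with 0 ≤ j < n_k, and for every i = 3,...,k, S_j(F,G) = 0 for every j with n_i < j < n_{i-1} − 1. -/

import Mathlib

open Polynomial Finset

section Defs

variable {K : Type*} [Field K]

/-- Entry `(p, q)` (0-indexed) of the `j`-th subresultant matrix `N^(j)(A, B)`,
where `a`, `b` denote the degrees of `A`, `B`.  The first `b - j` columns carry the
shifted coefficients of `A`, the next `a - j` columns those of `B`. -/
noncomputable def subresEntry (A B : Polynomial K) (a b j p q : ℕ) : K :=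
  if q < b - j then
    (if q ≤ p ∧ p ≤ q + a then A.coeff (a - (p - q)) else 0)
  else if q < (b - j) + (a - j) then
    (if q - (b - j) ≤ p ∧ p ≤ (q - (b - j)) + b then
        B.coeff (b - (p - (q - (b - j)))) else 0)
  else 0

/-- Determinant of the top-left `s × s` square of a `ℕ`-indexed matrix. -/
noncomputable def detN (s : ℕ) (M : ℕ → ℕ → K) : K :=
  Matrix.det (Matrix.of (fun p q : Fin s => M (p : ℕ) (q : ℕ)))

/-- Entries of `N_τ^(j)(A, B)`: the top `a + b - 2j - 1` rows of `N^(j)(A, B)`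
together with its `(a + b - j - τ)`-th row (1-indexed). -/
noncomputable def subresTau (A B : Polynomial K) (a b j τ : ℕ) : ℕ → ℕ → K := fun p q =>
  subresEntry A B a b j (if p < a + b - 2 * j - 1 then p else a + b - j - τ - 1) q

/-- The `j`-th subresultant `S_j(A, B) = Σ_{τ=0}^{j} det(N_τ^(j)(A, B)) xᵗ`. -/
noncomputable def subresPoly (A B : Polynomial K) (a b j : ℕ) : Polynomial K :=
  ∑ τ ∈ Finset.range (j + 1),
    Polynomial.C (detN (a + b - 2 * j) (subresTau A B a b j τ)) * Polynomial.X ^ τ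

/-- `u_{k,j}`; for `k = 1` it is `m + n - 2j`, and for `k ≥ 2` it equals
`(m+n-2j₁)·(∏_{l=2}^{k-1}(2j_{l-1}-2j_l-1))·(2j_{k-1}-2j-1)`. -/
def ufun (m n : ℕ) (jj : ℕ → ℕ) (k j : ℕ) : ℕ :=
  if k ≤ 1 then m + n - 2 * j
  else (m + n - 2 * jj 1) * (∏ i ∈ Finset.Icc 2 (k - 1), (2 * jj (i - 1) - 2 * jj i - 1)) *
        (2 * jj (k - 1) - 2 * j - 1)

/-- `b_{k,j} = 2j_{k-1} - 2j - 1`, with `b_{1,j} = 1`. -/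
def bfun (jj : ℕ → ℕ) (k j : ℕ) : ℕ :=
  if k ≤ 1 then 1 else 2 * jj (k - 1) - 2 * j - 1

/-- `r_{k,j} = (-1)^{(u_{k-1}-1)(1+2+⋯+(b_{k,j}-1))}`, with `r_{1,j} = 1`. -/
noncomputable def rfun (K : Type*) [Field K] (m n : ℕ) (jj : ℕ → ℕ) (k j : ℕ) : K :=
  if k ≤ 1 then 1
  else (-1 : K) ^ ((ufun m n jj (k - 1) (jj (k - 1)) - 1) * ∑ i ∈ Finset.range (bfun jj k j), i)

/-- The constant `B_k` of the fundamental theorem applied to the `k`-th PRS. -/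
noncomputable def Bconst (P : ℕ → ℕ → Polynomial K) (l : ℕ → ℕ) (α β : ℕ → ℕ → K) (k : ℕ) : K :=
  (P k (l k)).leadingCoeff ^ (((P k (l k - 1)).natDegree - (P k (l k)).natDegree) - 1) *
    ∏ i ∈ Finset.Icc 3 (l k),
      ((β k i / α k i) ^ ((P k (i - 1)).natDegree - (P k (l k)).natDegree) *
        (P k (i - 1)).leadingCoeff ^
          (((P k (i - 2)).natDegree - (P k (i - 1)).natDegree) +
            ((P k (i - 1)).natDegree - (P k i).natDegree)) *
        (-1 : K) ^ (((P k (i - 2)).natDegree - (P k (l k)).natDegree) *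
            ((P k (i - 1)).natDegree - (P k (l k)).natDegree)))

/-- `R̄_k = (R̄_{k-1})^{b_k} r_k B_k` with `R̄_0 = 1`. -/
noncomputable def Rbar (P : ℕ → ℕ → Polynomial K) (l : ℕ → ℕ) (α β : ℕ → ℕ → K)
    (m n : ℕ) (jj : ℕ → ℕ) : ℕ → K
  | 0 => 1
  | k + 1 =>
      (Rbar P l α β m n jj k) ^ (bfun jj (k + 1) (jj (k + 1))) *
        rfun K m n jj (k + 1) (jj (k + 1)) * Bconst P l α β (k + 1)

/-- `R̃_k = (R̃_{k-1})^{b_k} B_k` with `R̃_0 = R̃_1 = 1`. -/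
noncomputable def Rtil (P : ℕ → ℕ → Polynomial K) (l : ℕ → ℕ) (α β : ℕ → ℕ → K)
    (jj : ℕ → ℕ) : ℕ → K
  | 0 => 1
  | 1 => 1
  | k + 2 => (Rtil P l α β jj (k + 1)) ^ (bfun jj (k + 2) (jj (k + 2))) * Bconst P l α β (k + 2)

/-- `R'_k = (R'_{k-1})^{b_k} r_k` with `R'_0 = R'_1 = 1`. -/
noncomputable def Rprime (K : Type*) [Field K] (m n : ℕ) (jj : ℕ → ℕ) : ℕ → K
  | 0 => 1
  | 1 => 1
  | k + 2 =>
      (Rprime K m n jj (k + 1)) ^ (bfun jj (k + 2) (jj (k + 2))) *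
        rfun K m n jj (k + 2) (jj (k + 2))

/-- Number of columns of the `(k,j)`-th recursive subresultant matrix,
following its recursive block construction. -/
def colsRec (m n : ℕ) (jj : ℕ → ℕ) : ℕ → ℕ → ℕ
  | 0, _ => 0
  | 1, j => m + n - 2 * j
  | k + 2, j => (2 * jj (k + 1) - 2 * j - 1) * colsRec m n jj (k + 1) (jj (k + 1))

/-- Number of rows of the `(k,j)`-th recursive subresultant matrix,
following its recursive block construction. -/
def rowsRec (m n : ℕ) (jj : ℕ → ℕ) : ℕ → ℕ → ℕ
  | 0, _ => 0
  | 1, j => m + n - j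
  | k + 2, j =>
      (2 * jj (k + 1) - 2 * j - 1) * (rowsRec m n jj (k + 1) (jj (k + 1)) - (jj (k + 1) + 1)) +
        (2 * jj (k + 1) - j - 1)

/-- Entry `(p, q)` of the `(k, j)`-th recursive subresultant matrix `N̄^(k,j)(F, G)`.
For `k = 1` it is the subresultant matrix `N^(j)(F, G)`; for `k ≥ 2` it consists of a
block-diagonal upper part with `2j_{k-1}-2j-1` copies of `N̄_U^{(k-1,j_{k-1})}` and a lower
part with `j_{k-1}-j-1` staggered copies of `N̄_L^{(k-1,j_{k-1})}` followed by `j_{k-1}-j`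
staggered copies of `N̄'_L^{(k-1,j_{k-1})}`. -/
noncomputable def recMat (F G : Polynomial K) (m n : ℕ) (jj : ℕ → ℕ) : ℕ → ℕ → ℕ → ℕ → K
  | 0, _, _, _ => 0
  | 1, j, p, q => subresEntry F G m n j p q
  | k + 2, j, p, q =>
      let jp := jj (k + 1)
      let w := colsRec m n jj (k + 1) jp
      let hU := rowsRec m n jj (k + 1) jp - (jp + 1)
      let b := 2 * jp - 2 * j - 1
      if q < b * w then
        if p < b * hU then
          (if q / w = p / hU then recMat F G m n jj (k + 1) jp (p % hU) (q % w) else 0)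
        else
          (let r := p - b * hU
            if r < 2 * jp - j - 1 then
              if q / w < jp - j - 1 then
                (if q / w ≤ r ∧ r ≤ q / w + jp then
                    recMat F G m n jj (k + 1) jp (hU + (r - q / w)) (q % w)
                  else 0)
              else
                (let i' := q / w - (jp - j - 1)
                  if i' ≤ r ∧ r < i' + jp then
                    ((jp - (r - i') : ℕ) : K) *
                      recMat F G m n jj (k + 1) jp (hU + (r - i')) (q % w)
                  else 0)
            else 0)
      else 0

/-- Entries of `N̄_τ^(k,j)(F, G)`: the top `u_{k,j} - 1` rows of `N̄^(k,j)(F, G)` together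
with its `(u_{k,j} + j - τ)`-th row (1-indexed). -/
noncomputable def recTau (F G : Polynomial K) (m n : ℕ) (jj : ℕ → ℕ) (k j τ : ℕ) :
    ℕ → ℕ → K := fun p q =>
  recMat F G m n jj k j
    (if p < ufun m n jj k j - 1 then p else ufun m n jj k j + j - τ - 1) q

/-- The `(k, j)`-th recursive subresultant `S̄_{k,j}(F, G)`. -/
noncomputable def recSubPoly (F G : Polynomial K) (m n : ℕ) (jj : ℕ → ℕ) (k j : ℕ) :
    Polynomial K :=
  ∑ τ ∈ Finset.range (j + 1),
    Polynomial.C (detN (ufun m n jj k j) (recTau F G m n jj k j τ)) * Polynomial.X ^ τ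

/-- Entry `(p, q)` of the `(k, j)`-th nested subresultant matrix `Ñ^(k,j)(F, G)`:
`Ñ^(1,j) = N^(j)(P₁⁽¹⁾, P₂⁽¹⁾)` and
`Ñ^(k,j) = N^(j)(S̃_{k-1,j_{k-1}}, (d/dx) S̃_{k-1,j_{k-1}})` for `k ≥ 2`. -/
noncomputable def nestMat (P : ℕ → ℕ → Polynomial K) (jj : ℕ → ℕ) : ℕ → ℕ → ℕ → ℕ → K
  | 0, _, _, _ => 0
  | 1, j, p, q =>
      subresEntry (P 1 1) (P 1 2) (P 1 1).natDegree (P 1 2).natDegree j p q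
  | k + 2, j, p, q =>
      let d := (P (k + 1) 1).natDegree + (P (k + 1) 2).natDegree
      let Sprev : Polynomial K :=
        ∑ τ ∈ Finset.range (jj (k + 1) + 1),
          Polynomial.C (detN (d - 2 * jj (k + 1)) (fun p' q' =>
            nestMat P jj (k + 1) (jj (k + 1))
              (if p' < d - 2 * jj (k + 1) - 1 then p' else d - jj (k + 1) - τ - 1) q')) *
            Polynomial.X ^ τ
      subresEntry Sprev (Polynomial.derivative Sprev)
        (P (k + 2) 1).natDegree (P (k + 2) 2).natDegree j p q

/-- Entries of `Ñ_τ^(k,j)(F, G)`. -/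
noncomputable def nestTau (P : ℕ → ℕ → Polynomial K) (jj : ℕ → ℕ) (k j τ : ℕ) :
    ℕ → ℕ → K := fun p q =>
  nestMat P jj k j
    (if p < (P k 1).natDegree + (P k 2).natDegree - 2 * j - 1 then p
      else (P k 1).natDegree + (P k 2).natDegree - j - τ - 1) q

/-- The `(k, j)`-th nested subresultant `S̃_{k,j}(F, G)`. -/
noncomputable def nestSub (P : ℕ → ℕ → Polynomial K) (jj : ℕ → ℕ) (k j : ℕ) : Polynomial K :=
  ∑ τ ∈ Finset.range (j + 1),
    Polynomial.C
      (detN ((P k 1).natDegree + (P k 2).natDegree - 2 * j) (nestTau P jj k j τ)) *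
      Polynomial.X ^ τ

/-- Entry `(p, q)` of the `(k, j)`-th reduced nested subresultant matrix `N̂^(k,j)(F, G)`:
it is `N^(j)(F, G)` for `k = 1`; for `k ≥ 2`, writing the upper part of
`N̂^{(k-1,j_{k-1})}` as `(U | v)` with `U` square, the entry `h_{p,q}` is `x_{p,q} · v`
where `x_{p,q}` solves `x_{p,q} U = -b_{p,q}` and `b_{p,q}` is built from the bottom rows
of `N̂^{(k-1,j_{k-1})}` exactly as the entry `(p, q)` of
`H^(k,j) = N^(j)(Â^{(k-1)}, (d/dx)Â^{(k-1)})` is built from the coefficients of `Â^{(k-1)}`. -/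
noncomputable def redMat (P : ℕ → ℕ → Polynomial K) (jj : ℕ → ℕ) : ℕ → ℕ → ℕ → ℕ → K
  | 0, _, _, _ => 0
  | 1, j, p, q =>
      subresEntry (P 1 1) (P 1 2) (P 1 1).natDegree (P 1 2).natDegree j p q
  | k + 2, j, p, q =>
      let jp := jj (k + 1)
      let s := (P (k + 1) 1).natDegree + (P (k + 1) 2).natDegree - 2 * jp - 1
      let U : Matrix (Fin s) (Fin s) K :=
        Matrix.of fun r c => redMat P jj (k + 1) jp (r : ℕ) (c : ℕ)
      let v : Fin s → K := fun r => redMat P jj (k + 1) jp (r : ℕ) s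
      let coefPoly : (ℕ → K) → Polynomial K := fun φ =>
        ∑ τ ∈ Finset.range (jp + 1), Polynomial.C (φ τ) * Polynomial.X ^ τ
      let Hent : (ℕ → K) → K := fun φ =>
        subresEntry (coefPoly φ) (Polynomial.derivative (coefPoly φ))
          (P (k + 2) 1).natDegree (P (k + 2) 2).natDegree j p q
      let brow : Fin s → K := fun c =>
        Hent (fun τ => redMat P jj (k + 1) jp (s + (jp - τ)) (c : ℕ))
      dotProduct (Matrix.vecMul (fun c => -(brow c)) U⁻¹) v

/-- `Â_τ^{(k)} = det(N̂_τ^{(k,j_k)})`. -/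
noncomputable def Ahat (P : ℕ → ℕ → Polynomial K) (jj : ℕ → ℕ) (k τ : ℕ) : K :=
  detN ((P k 1).natDegree + (P k 2).natDegree - 2 * jj k) (fun r c =>
    redMat P jj k (jj k)
      (if r < (P k 1).natDegree + (P k 2).natDegree - 2 * jj k - 1 then r
        else ((P k 1).natDegree + (P k 2).natDegree - 2 * jj k - 1) + (jj k - τ)) c)

/-- `Â^{(k)}(x) = Σ_τ Â_τ^{(k)} xᵗ`. -/
noncomputable def Apoly (P : ℕ → ℕ → Polynomial K) (jj : ℕ → ℕ) (k : ℕ) : Polynomial K :=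
  ∑ τ ∈ Finset.range (jj k + 1), Polynomial.C (Ahat P jj k τ) * Polynomial.X ^ τ

/-- Entries of `H^(k,j) = N^(j)(Â^{(k-1)}(x), (d/dx)Â^{(k-1)}(x))`. -/
noncomputable def Hmat (P : ℕ → ℕ → Polynomial K) (jj : ℕ → ℕ) (k j : ℕ) : ℕ → ℕ → K :=
  fun p q =>
    subresEntry (Apoly P jj (k - 1)) (Polynomial.derivative (Apoly P jj (k - 1)))
      (P k 1).natDegree (P k 2).natDegree j p q

/-- Entries of `H_τ^(k,j)`: top `J_{k,j} - 1` rows of `H^(k,j)` together with its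
`(I_{k,j} - τ)`-th row (1-indexed). -/
noncomputable def HTau (P : ℕ → ℕ → Polynomial K) (jj : ℕ → ℕ) (k j τ : ℕ) :
    ℕ → ℕ → K := fun p q =>
  Hmat P jj k j
    (if p < (P k 1).natDegree + (P k 2).natDegree - 2 * j - 1 then p
      else (P k 1).natDegree + (P k 2).natDegree - j - τ - 1) q

/-- Entries of `N̂_τ^(k,j)(F, G)`. -/
noncomputable def redTau (P : ℕ → ℕ → Polynomial K) (jj : ℕ → ℕ) (k j τ : ℕ) :
    ℕ → ℕ → K := fun p q =>
  redMat P jj k j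
    (if p < (P k 1).natDegree + (P k 2).natDegree - 2 * j - 1 then p
      else (P k 1).natDegree + (P k 2).natDegree - j - τ - 1) q

/-- The `(k, j)`-th reduced nested subresultant `Ŝ_{k,j}(F, G)`. -/
noncomputable def redSubPoly (P : ℕ → ℕ → Polynomial K) (jj : ℕ → ℕ) (k j : ℕ) :
    Polynomial K :=
  ∑ τ ∈ Finset.range (j + 1),
    Polynomial.C
      (detN ((P k 1).natDegree + (P k 2).natDegree - 2 * j) (redTau P jj k j τ)) *
      Polynomial.X ^ τ

/-- `det(U^(k))`, where `U^(k)` is the square left part of the upper block of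
`N̂^{(k-1,j_{k-1})}(F, G)`. -/
noncomputable def Udet (P : ℕ → ℕ → Polynomial K) (jj : ℕ → ℕ) (k : ℕ) : K :=
  detN ((P (k - 1) 1).natDegree + (P (k - 1) 2).natDegree - 2 * jj (k - 1) - 1)
    (redMat P jj (k - 1) (jj (k - 1)))

/-- `B̂_{k,j} = det(U^(k))^{J_{k,j}}` (with `B̂_{1,j} = 1`). -/
noncomputable def Bhatkj (P : ℕ → ℕ → Polynomial K) (jj : ℕ → ℕ) (k j : ℕ) : K :=
  if k ≤ 1 then 1
  else (Udet P jj k) ^ ((P k 1).natDegree + (P k 2).natDegree - 2 * j)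

/-- `B̂_k = B̂_{k,j_k}` with `B̂_1 = B̂_2 = 1`. -/
noncomputable def BhatK (P : ℕ → ℕ → Polynomial K) (jj : ℕ → ℕ) (k : ℕ) : K :=
  if k ≤ 2 then 1 else Bhatkj P jj k (jj k)

/-- `R̂_k = (R̂_{k-1}·B̂_{k-1})^{J_{k,j_k}}` with `R̂_1 = R̂_2 = 1`. -/
noncomputable def Rhat (P : ℕ → ℕ → Polynomial K) (jj : ℕ → ℕ) : ℕ → K
  | 0 => 1
  | 1 => 1
  | 2 => 1
  | k + 3 =>
      (Rhat P jj (k + 2) * BhatK P jj (k + 2)) ^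
        ((P (k + 3) 1).natDegree + (P (k + 3) 2).natDegree - 2 * jj (k + 3))

end Defs

section Aux

lemma sum_range_add' {M : Type*} [AddCommMonoid M] (f : ℕ → M) (a b : ℕ) :
    ∑ q ∈ Finset.range (a + b), f q = ∑ q ∈ Finset.range a, f q + ∑ q ∈ Finset.range b, f (a + q) := by
  induction b with
  | zero => simp
  | succ b ih => rw [Nat.add_succ, Finset.sum_range_succ, ih, Finset.sum_range_succ, add_assoc]

lemma coeff_mul_range {K : Type*} [Field K] (u F : Polynomial K) (N D : ℕ)
    (hu : ∀ t, N ≤ t → u.coeff t = 0) :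
    (u * F).coeff D = ∑ e ∈ Finset.range N, if e ≤ D then u.coeff e * F.coeff (D - e) else 0 := by
  rw [Polynomial.coeff_mul, Finset.Nat.sum_antidiagonal_eq_sum_range_succ_mk]
  have key : ∀ e ∈ Finset.range (D+1), u.coeff e * F.coeff (D - e)
      = if e ≤ D then u.coeff e * F.coeff (D - e) else 0 := by
    intro e he
    rw [if_pos (by simpa [Nat.lt_succ_iff] using Finset.mem_range.1 he)]
  rw [Finset.sum_congr rfl key]
  rw [Finset.sum_subset (Finset.range_subset_range.2 (Nat.le_max_right N (D+1)))
    (fun e _ he => if_neg (by simp only [Finset.mem_range, Nat.lt_succ_iff] at he; omega))]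
  rw [← Finset.sum_subset (Finset.range_subset_range.2 (Nat.le_max_left N (D+1)))
    (fun e _ he => ?_)]
  simp only [Finset.mem_range, not_lt] at he
  split
  · rw [hu e he, zero_mul]
  · rfl

lemma det_tau_zero {K : Type*} [Field K] (F G : Polynomial K) (m n j τ : ℕ)
    (hF : F.natDegree = m) (hG : G.natDegree = n) (hmn : n ≤ m) (hj : j + 2 ≤ n) (hτ : τ ≤ j)
    (u v : Polynomial K)
    (hu : ∀ t, n - j ≤ t → u.coeff t = 0)
    (hv : ∀ t, m - j ≤ t → v.coeff t = 0)
    (hne : u ≠ 0 ∨ v ≠ 0)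
    (hT : ∀ d, j < d → (u * F + v * G).coeff d = 0)
    (h0 : (u * F + v * G).coeff τ = 0) :
    detN (m + n - 2*j) (subresTau F G m n j τ) = 0 := by
  classical
  set s := m + n - 2*j with hs
  set c : ℕ → K := fun q =>
    if q < n - j then u.coeff (n - j - 1 - q) else v.coeff (m - j - 1 - (q - (n - j))) with hc
  have hrow : ∀ r, r ≤ m + n - j - 1 →
      ∑ q ∈ Finset.range s, subresEntry F G m n j r q * c q
        = (u * F + v * G).coeff (m + n - j - 1 - r) := by
    intro r hr
    set D := m + n - j - 1 - r with hD
    have hsplit : s = (n - j) + (m - j) := by omega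
    rw [hsplit, sum_range_add', Polynomial.coeff_add]
    have p1 : ∑ q ∈ Finset.range (n-j), subresEntry F G m n j r q * c q = (u * F).coeff D := by
      rw [coeff_mul_range u F (n-j) D hu, ← Finset.sum_range_reflect]
      apply Finset.sum_congr rfl
      intro q hq
      have hq' : q < n - j := Finset.mem_range.1 hq
      have hcq : c (n - j - 1 - q) = u.coeff q := by
        rw [hc]
        simp only [if_pos (show n - j - 1 - q < n - j by omega)]
        rw [show n - j - 1 - (n - j - 1 - q) = q by omega]
      rw [hcq]
      unfold subresEntry
      rw [if_pos (show n - j - 1 - q < n - j by omega)]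
      by_cases hcase : n - j - 1 - q ≤ r ∧ r ≤ (n - j - 1 - q) + m
      · rw [if_pos hcase, if_pos (show q ≤ D by omega),
          show m - (r - (n - j - 1 - q)) = D - q by omega, mul_comm]
      · rw [if_neg hcase, zero_mul]
        by_cases h2 : q ≤ D
        · rw [if_pos h2,
            Polynomial.coeff_eq_zero_of_natDegree_lt (show F.natDegree < D - q by rw [hF]; omega),
            mul_zero]
        · rw [if_neg h2]
    have p2 : ∑ q ∈ Finset.range (m-j), subresEntry F G m n j r ((n-j) + q) * c ((n-j) + q)
        = (v * G).coeff D := by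
      rw [coeff_mul_range v G (m-j) D hv, ← Finset.sum_range_reflect]
      apply Finset.sum_congr rfl
      intro q hq
      have hq' : q < m - j := Finset.mem_range.1 hq
      have hsub : (n - j) + (m - j - 1 - q) - (n - j) = m - j - 1 - q := by omega
      have hcq : c ((n-j) + (m - j - 1 - q)) = v.coeff q := by
        rw [hc]
        simp only [if_neg (show ¬((n-j) + (m - j - 1 - q) < n - j) by omega), hsub]
        rw [show m - j - 1 - (m - j - 1 - q) = q by omega]
      rw [hcq]
      unfold subresEntry
      rw [if_neg (show ¬((n-j) + (m - j - 1 - q) < n - j) by omega),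
        if_pos (show (n-j) + (m - j - 1 - q) < (n - j) + (m - j) by omega), hsub]
      by_cases hcase : m - j - 1 - q ≤ r ∧ r ≤ (m - j - 1 - q) + n
      · rw [if_pos hcase, if_pos (show q ≤ D by omega),
          show n - (r - (m - j - 1 - q)) = D - q by omega, mul_comm]
      · rw [if_neg hcase, zero_mul]
        by_cases h2 : q ≤ D
        · rw [if_pos h2,
            Polynomial.coeff_eq_zero_of_natDegree_lt (show G.natDegree < D - q by rw [hG]; omega),
            mul_zero]
        · rw [if_neg h2]
    rw [p1, p2]
  set cv : Fin s → K := fun q => c (q : ℕ) with hcv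
  have hcv0 : cv ≠ 0 := by
    rcases hne with hu0 | hv0
    · have htd : u.natDegree < n - j := by
        by_contra h
        exact hu0 (Polynomial.leadingCoeff_eq_zero.mp (hu _ (le_of_not_gt h)))
      intro h0'
      have := congrFun h0' ⟨n - j - 1 - u.natDegree, by omega⟩
      rw [hcv] at this
      simp only [hc, Pi.zero_apply] at this
      rw [if_pos (show n - j - 1 - u.natDegree < n - j by omega),
        show n - j - 1 - (n - j - 1 - u.natDegree) = u.natDegree by omega] at this
      exact hu0 (Polynomial.leadingCoeff_eq_zero.mp this)
    · have htd : v.natDegree < m - j := by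
        by_contra h
        exact hv0 (Polynomial.leadingCoeff_eq_zero.mp (hv _ (le_of_not_gt h)))
      intro h0'
      have := congrFun h0' ⟨(n - j) + (m - j - 1 - v.natDegree), by omega⟩
      rw [hcv] at this
      simp only [hc, Pi.zero_apply] at this
      rw [if_neg (show ¬((n-j) + (m - j - 1 - v.natDegree) < n - j) by omega),
        show (n-j) + (m - j - 1 - v.natDegree) - (n - j) = m - j - 1 - v.natDegree by omega,
        show m - j - 1 - (m - j - 1 - v.natDegree) = v.natDegree by omega] at this
      exact hv0 (Polynomial.leadingCoeff_eq_zero.mp this)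
  have hmul : (Matrix.of fun p q : Fin s => subresTau F G m n j τ (p : ℕ) (q : ℕ)).mulVec cv = 0 := by
    funext p
    simp only [Matrix.mulVec, dotProduct, Matrix.of_apply, Pi.zero_apply, hcv]
    rw [Fin.sum_univ_eq_sum_range (fun q => subresTau F G m n j τ (p : ℕ) q * c q) s]
    unfold subresTau
    by_cases hp : (p : ℕ) < m + n - 2*j - 1
    · simp only [if_pos hp]
      rw [hrow _ (by omega)]
      exact hT _ (by omega)
    · simp only [if_neg hp]
      rw [hrow _ (by omega), show m + n - j - 1 - (m + n - j - τ - 1) = τ by omega]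
      exact h0
  have hdet := Matrix.exists_mulVec_eq_zero_iff.mp ⟨cv, hcv0, hmul⟩
  exact hdet

end Aux


theorem statement_0 {K : Type*} [Field K] (F G : Polynomial K) (m n : ℕ)
    (hF : F.natDegree = m) (hG : G.natDegree = n) (hmn : n ≤ m) (hn : 0 < n)
    (kk : ℕ) (hkk : 2 ≤ kk) (P Q : ℕ → Polynomial K) (α β : ℕ → K)
    (hP1 : P 1 = F) (hP2 : P 2 = G)
    (hPne : ∀ i, 1 ≤ i → i ≤ kk → P i ≠ 0)
    (hα : ∀ i, 3 ≤ i → i ≤ kk → α i ≠ 0)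
    (hβ : ∀ i, 3 ≤ i → i ≤ kk → β i ≠ 0)
    (hrel : ∀ i, 3 ≤ i → i ≤ kk →
      Polynomial.C (α i) * P (i - 2) = Q (i - 1) * P (i - 1) + Polynomial.C (β i) * P i)
    (hdeg : ∀ i, 3 ≤ i → i ≤ kk → (P i).natDegree < (P (i - 1)).natDegree)
    (hcomp : (P kk).natDegree = 0) :
    (∀ j, j < (P kk).natDegree → subresPoly F G m n j = 0) ∧
    (∀ i, 3 ≤ i → i ≤ kk → ∀ j, (P i).natDegree < j → j < (P (i - 1)).natDegree - 1 →
      subresPoly F G m n j = 0) := by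

  classical
  have hP2n : (P 2).natDegree = n := by rw [hP2, hG]
  have hP1m : (P 1).natDegree = m := by rw [hP1, hF]
  -- one-step decrease
  have hstep : ∀ i, 2 ≤ i → i ≤ kk → (P i).natDegree ≤ (P (i-1)).natDegree := by
    intro i h2 hik
    rcases eq_or_lt_of_le h2 with h | h
    · rw [← h]; show (P 2).natDegree ≤ (P 1).natDegree; omega
    · exact (hdeg i h hik).le
  -- antitonicity
  have hanti : ∀ a b, 1 ≤ a → a ≤ b → b ≤ kk → (P b).natDegree ≤ (P a).natDegree := by
    intro a b ha hab
    induction b, hab using Nat.le_induction with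
    | base => intro _; exact le_rfl
    | succ b hb ih =>
      intro hbk
      have h1 : (P (b+1)).natDegree ≤ (P b).natDegree := by
        have := hstep (b+1) (by omega) hbk
        simpa using this
      exact le_trans h1 (ih (by omega))
  -- degree of quotients
  have hq : ∀ i, 3 ≤ i → i ≤ kk → (Q (i-1)).natDegree + (P (i-1)).natDegree ≤ (P (i-2)).natDegree := by
    intro i h3 hik
    have hstep' : (P (i-1)).natDegree ≤ (P (i-2)).natDegree := by
      have := hanti (i-2) (i-1) (by omega) (by omega) (by omega)
      exact this
    have hPi2 : (P i).natDegree ≤ (P (i-2)).natDegree :=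
      le_trans (hdeg i h3 hik).le hstep'
    have heq : Q (i-1) * P (i-1) = Polynomial.C (α i) * P (i-2) - Polynomial.C (β i) * P i := by
      have := hrel i h3 hik; linear_combination -this
    by_cases hQ : Q (i-1) = 0
    · simp only [hQ, Polynomial.natDegree_zero, zero_add]; exact hstep'
    · have hP1ne : P (i-1) ≠ 0 := hPne (i-1) (by omega) (by omega)
      rw [← Polynomial.natDegree_mul hQ hP1ne, heq]
      refine le_trans (Polynomial.natDegree_sub_le _ _) (max_le ?_ ?_)
      · exact le_trans (Polynomial.natDegree_C_mul_le _ _) le_rfl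
      · exact le_trans (Polynomial.natDegree_C_mul_le _ _) hPi2
  -- cofactor representation
  have hUV : ∀ i, 2 ≤ i → i ≤ kk → ∃ U V : Polynomial K, P i = U * F + V * G ∧
      (U = 0 ∨ U.natDegree + (P (i-1)).natDegree ≤ n) ∧
      (V = 0 ∨ V.natDegree + (P (i-1)).natDegree ≤ m) := by
    intro i
    induction i using Nat.strong_induction_on with
    | _ i ih =>
      intro h2 hik
      rcases Nat.lt_or_ge i 4 with h4 | h4
      · interval_cases i
        · refine ⟨0, 1, by simp [hP2], Or.inl rfl, Or.inr ?_⟩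
          simp [hP1m]
        · have hr := hrel 3 le_rfl hik
          have hb := hβ 3 le_rfl hik
          have hinv : Polynomial.C (β 3) * Polynomial.C ((β 3)⁻¹) = (1 : Polynomial K) := by
            rw [← Polynomial.C_mul, mul_inv_cancel₀ hb, Polynomial.C_1]
          have hr' : Polynomial.C (α 3) * P 1 = Q 2 * P 2 + Polynomial.C (β 3) * P 3 := by
            simpa using hr
          have hq' : (Q 2).natDegree + (P 2).natDegree ≤ (P 1).natDegree := by
            simpa using hq 3 le_rfl hik
          refine ⟨Polynomial.C (α 3 * (β 3)⁻¹), -(Polynomial.C ((β 3)⁻¹) * Q 2), ?_, Or.inr ?_, ?_⟩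
          · have hC : (Polynomial.C (β 3) : Polynomial K) ≠ 0 := by
              simpa using hb
            apply mul_left_cancel₀ hC
            rw [← hP1, ← hP2, Polynomial.C_mul]
            have hrw : Polynomial.C (β 3) *
                (Polynomial.C (α 3) * Polynomial.C ((β 3)⁻¹) * P 1 +
                  -(Polynomial.C ((β 3)⁻¹) * Q 2) * P 2)
                = Polynomial.C (α 3) * P 1 - Q 2 * P 2 := by
              have : Polynomial.C (β 3) *
                  (Polynomial.C (α 3) * Polynomial.C ((β 3)⁻¹) * P 1 +
                    -(Polynomial.C ((β 3)⁻¹) * Q 2) * P 2)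
                  = (Polynomial.C (β 3) * Polynomial.C ((β 3)⁻¹)) *
                      (Polynomial.C (α 3) * P 1 - Q 2 * P 2) := by ring
              rw [this, hinv, one_mul]
            rw [hrw]
            linear_combination -hr'
          · simp only [Polynomial.natDegree_C, zero_add]
            have : (P (3 - 1 : ℕ)).natDegree = (P 2).natDegree := by norm_num
            omega
          · by_cases hQ0 : Q 2 = 0
            · exact Or.inl (by rw [hQ0, mul_zero, neg_zero])
            · refine Or.inr ?_
              have h1 : (-(Polynomial.C ((β 3)⁻¹) * Q 2)).natDegree ≤ (Q 2).natDegree := by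
                rw [Polynomial.natDegree_neg]
                exact Polynomial.natDegree_C_mul_le _ _
              have : (P (3 - 1 : ℕ)).natDegree = (P 2).natDegree := by norm_num
              omega
      · obtain ⟨U1, V1, e1, hU1, hV1⟩ := ih (i-1) (by omega) (by omega) (by omega)
        obtain ⟨U2, V2, e2, hU2, hV2⟩ := ih (i-2) (by omega) (by omega) (by omega)
        rw [show i - 1 - 1 = i - 2 by omega] at hU1 hV1
        rw [show i - 2 - 1 = i - 3 by omega] at hU2 hV2
        have hr := hrel i (by omega) hik
        have hb := hβ i (by omega) hik
        have hqd := hq i (by omega) hik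
        have hinv : Polynomial.C (β i) * Polynomial.C ((β i)⁻¹) = (1 : Polynomial K) := by
          rw [← Polynomial.C_mul, mul_inv_cancel₀ hb, Polynomial.C_1]
        have h13 : (P (i-1)).natDegree ≤ (P (i-3)).natDegree :=
          hanti (i-3) (i-1) (by omega) (by omega) (by omega)
        have h12 : (P (i-1)).natDegree ≤ (P (i-2)).natDegree :=
          hanti (i-2) (i-1) (by omega) (by omega) (by omega)
        have h1n : (P (i-1)).natDegree ≤ n := by
          have := hanti 2 (i-1) (by omega) (by omega) (by omega)
          omega
        have h2n : (P (i-2)).natDegree ≤ n := by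
          have := hanti 2 (i-2) (by omega) (by omega) (by omega)
          omega
        have bnd : ∀ (W2 W1 : Polynomial K) (N : ℕ),
            (P (i-1)).natDegree ≤ N →
            (P (i-2)).natDegree ≤ N →
            (W2 = 0 ∨ W2.natDegree + (P (i-3)).natDegree ≤ N) →
            (W1 = 0 ∨ W1.natDegree + (P (i-2)).natDegree ≤ N) →
            (Polynomial.C ((β i)⁻¹) * (Polynomial.C (α i) * W2 - Q (i-1) * W1) = 0 ∨
              (Polynomial.C ((β i)⁻¹) * (Polynomial.C (α i) * W2 - Q (i-1) * W1)).natDegree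
                + (P (i-1)).natDegree ≤ N) := by
          intro W2 W1 N hN hN2 hW2 hW1
          right
          have hd : (Polynomial.C ((β i)⁻¹) * (Polynomial.C (α i) * W2 - Q (i-1) * W1)).natDegree
              ≤ max W2.natDegree ((Q (i-1)).natDegree + W1.natDegree) := by
            refine le_trans (Polynomial.natDegree_C_mul_le _ _) ?_
            refine le_trans (Polynomial.natDegree_sub_le _ _) ?_
            exact max_le_max (Polynomial.natDegree_C_mul_le _ _) (Polynomial.natDegree_mul_le)
          have hb1 : W2.natDegree + (P (i-1)).natDegree ≤ N := by
            rcases hW2 with h | h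
            · rw [h]; simpa using hN
            · omega
          have hb2 : (Q (i-1)).natDegree + W1.natDegree + (P (i-1)).natDegree ≤ N := by
            rcases hW1 with h | h
            · rw [h]; simp only [Polynomial.natDegree_zero, add_zero]; omega
            · omega
          rcases le_total W2.natDegree ((Q (i-1)).natDegree + W1.natDegree) with hm' | hm'
          · rw [max_eq_right hm'] at hd; omega
          · rw [max_eq_left hm'] at hd; omega
        refine ⟨Polynomial.C ((β i)⁻¹) * (Polynomial.C (α i) * U2 - Q (i-1) * U1),
                Polynomial.C ((β i)⁻¹) * (Polynomial.C (α i) * V2 - Q (i-1) * V1),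
                ?_, bnd U2 U1 n h1n h2n hU2 hU1, bnd V2 V1 m (by omega) (by omega) hV2 hV1⟩
        have hC : (Polynomial.C (β i) : Polynomial K) ≠ 0 := by simpa using hb
        apply mul_left_cancel₀ hC
        have hrw : Polynomial.C (β i) *
            (Polynomial.C ((β i)⁻¹) * (Polynomial.C (α i) * U2 - Q (i-1) * U1) * F +
              Polynomial.C ((β i)⁻¹) * (Polynomial.C (α i) * V2 - Q (i-1) * V1) * G)
            = (Polynomial.C (α i) * U2 - Q (i-1) * U1) * F +
              (Polynomial.C (α i) * V2 - Q (i-1) * V1) * G := by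
          have h' : Polynomial.C (β i) *
              (Polynomial.C ((β i)⁻¹) * (Polynomial.C (α i) * U2 - Q (i-1) * U1) * F +
                Polynomial.C ((β i)⁻¹) * (Polynomial.C (α i) * V2 - Q (i-1) * V1) * G)
              = (Polynomial.C (β i) * Polynomial.C ((β i)⁻¹)) *
                  ((Polynomial.C (α i) * U2 - Q (i-1) * U1) * F +
                    (Polynomial.C (α i) * V2 - Q (i-1) * V1) * G) := by ring
          rw [h', hinv, one_mul]
        rw [hrw]
        linear_combination (-(1:Polynomial K)) * hr + Polynomial.C (α i) * e2 - Q (i-1) * e1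
  constructor
  · intro j hj
    rw [hcomp] at hj
    exact absurd hj (Nat.not_lt_zero j)
  · intro i h3 hik j hji hjm
    have hi1 : 2 ≤ i - 1 := by omega
    have hn1n : (P (i-1)).natDegree ≤ n := by
      have := hanti 2 (i-1) (by omega) (by omega) (by omega)
      omega
    have hjn : j + 2 ≤ n := by omega
    obtain ⟨U, V, hePV, hU, hV⟩ := hUV i (by omega) hik
    have hPine : P i ≠ 0 := hPne i (by omega) hik
    have hUVne : ¬(U = 0 ∧ V = 0) := by
      rintro ⟨h1, h2⟩
      apply hPine
      rw [hePV, h1, h2]; ring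
    unfold subresPoly
    apply Finset.sum_eq_zero
    intro τ hτmem
    have hτj : τ ≤ j := by
      have := Finset.mem_range.1 hτmem; omega
    set S := P i with hS
    set w : Polynomial K := if S.coeff τ = 0 then 1
      else Polynomial.C (S.coeff τ) * Polynomial.X - Polynomial.C ((Polynomial.X * S).coeff τ)
      with hw
    have hwne : w ≠ 0 := by
      rw [hw]
      split
      · exact one_ne_zero
      · rename_i h
        intro h0'
        apply h
        have := congrArg (fun p => Polynomial.coeff p 1) h0'
        simpa [Polynomial.coeff_sub, Polynomial.coeff_C_mul] using this
    have hwdeg : w.natDegree ≤ 1 := by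
      rw [hw]
      split
      · simp
      · refine le_trans (Polynomial.natDegree_sub_le _ _) (max_le ?_ ?_)
        · exact le_trans (Polynomial.natDegree_C_mul_le _ _) (by simp)
        · simp
    have hwτ : (w * S).coeff τ = 0 := by
      rw [hw]
      split
      · rename_i h; simpa using h
      · rw [sub_mul, Polynomial.coeff_sub, mul_assoc, Polynomial.coeff_C_mul,
          Polynomial.coeff_C_mul]
        ring
    have hTeq : (w * U) * F + (w * V) * G = w * S := by
      rw [hePV]; ring
    have hSd : S.natDegree < j := hji
    have hwS : (w * S).natDegree ≤ j := by
      refine le_trans Polynomial.natDegree_mul_le ?_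
      omega
    have hz := det_tau_zero F G m n j τ hF hG hmn hjn hτj (w * U) (w * V)
      (fun t ht => by
        by_cases hU0 : U = 0
        · simp [hU0]
        · apply Polynomial.coeff_eq_zero_of_natDegree_lt
          have h1 : (w * U).natDegree ≤ w.natDegree + U.natDegree := Polynomial.natDegree_mul_le
          rcases hU with h | h
          · exact absurd h hU0
          · omega)
      (fun t ht => by
        by_cases hV0 : V = 0
        · simp [hV0]
        · apply Polynomial.coeff_eq_zero_of_natDegree_lt
          have h1 : (w * V).natDegree ≤ w.natDegree + V.natDegree := Polynomial.natDegree_mul_le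
          rcases hV with h | h
          · exact absurd h hV0
          · omega)
      (by
        by_cases hU0 : U = 0
        · right
          exact mul_ne_zero hwne (fun h => hUVne ⟨hU0, h⟩)
        · exact Or.inl (mul_ne_zero hwne hU0))
      (fun d hd => by
        rw [hTeq]
        exact Polynomial.coeff_eq_zero_of_natDegree_lt (by omega))
      (by rw [hTeq]; exact hwτ)
    rw [hz, map_zero, zero_mul]
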